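/- Let K > 0, λ ∈ ℝ, ξ ≠ 0. Let a : ℝ → (0,∞) be twice continuously differentiable satisfying the Emden equation a''(t) = −λ/a(t) + ξ²/a(t)³, and let f : [0,∞) → ℝ be twice continuously differentiable with f'(0) = 0 satisfying the Liouville equation f''(s) + f'(s)/s + (2π/K)·e^{f(s)} = 2λ/K for s > 0. Define, with r = √(x²+y²), ρ(t,x,y) = e^{f(r/a(t))}/a(t)², u₁ = (a'(t)/a(t))·x − (ξ/a(t)²)·y, u₂ = (ξ/a(t)²)·x + (a'(t)/a(t))·y. Then (ρ, u₁, u₂) is a classical solution of the two-dimensional isothermal Euler–Poisson system at every point with r > 0: the continuity equation ∂ρ/∂t + ∂(ρu₁)/∂x + ∂(ρu₂)/∂y = 0 holds, and both momentum equations ρ·(∂uᵢ/∂t + u₁·∂uᵢ/∂x + u₂·∂uᵢ/∂y) + ∂(Kρ)/∂xᵢ + ρ·(xᵢ/r²)·2π·∫₀ʳ ρ(t,η)·η dη = 0 hold for i = 1, 2 (with x₁ = x, x₂ = y). -/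

import Mathlib

open Real

/-- The planar radius `r = √(x² + y²)`. -/
noncomputable def rad (x y : ℝ) : ℝ := Real.sqrt (x ^ 2 + y ^ 2)

open MeasureTheory intervalIntegral Set Filter Topology in
lemma aux_int_id (K lam : ℝ) (hK : 0 < K) (f f' f'' : ℝ → ℝ)
    (hfc : ContinuousOn f (Set.Ici 0))
    (hf'c : ContinuousOn f' (Set.Ici 0))
    (hfd : ∀ s ∈ Set.Ioi (0 : ℝ), HasDerivAt f (f' s) s)
    (hfd' : ∀ s ∈ Set.Ioi (0 : ℝ), HasDerivAt f' (f'' s) s)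
    (hf'0 : f' 0 = 0)
    (hfode : ∀ s ∈ Set.Ioi (0 : ℝ),
      f'' s + f' s / s + (2 * π / K) * Real.exp (f s) = 2 * lam / K)
    {s : ℝ} (hs : 0 < s) :
    2 * π * (∫ σ in (0:ℝ)..s, Real.exp (f σ) * σ) = lam * s ^ 2 - K * (s * f' s) := by
  set G : ℝ → ℝ := fun σ => Real.exp (f σ) * σ with hG
  have hGc : ContinuousOn G (Set.Ici 0) :=
    (Real.continuous_exp.comp_continuousOn hfc).mul continuousOn_id
  have hGint : ∀ b, 0 ≤ b → IntervalIntegrable G volume 0 b := fun b hb =>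
    (hGc.mono (by rw [Set.uIcc_of_le hb]; exact Set.Icc_subset_Ici_self)).intervalIntegrable
  set F : ℝ → ℝ := fun u => K * (u * f' u) + 2 * π * (∫ σ in (0:ℝ)..u, G σ) - lam * u ^ 2
    with hF
  have hFd : ∀ u ∈ Set.Ioi (0:ℝ), HasDerivAt F 0 u := by
    intro u hu
    have hu0 : (0:ℝ) < u := hu
    have hGcont : ∀ z ∈ Set.Ioi (0:ℝ), ContinuousAt G z := fun z hz =>
      (Real.continuous_exp.continuousAt.comp (hfd z hz).continuousAt).mul continuousAt_id
    have h2 : HasDerivAt (fun v => ∫ σ in (0:ℝ)..v, G σ) (G u) u :=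
      intervalIntegral.integral_hasDerivAt_right (hGint u hu0.le)
        (ContinuousAt.stronglyMeasurableAtFilter isOpen_Ioi hGcont u hu) (hGcont u hu)
    have h1 : HasDerivAt (fun v => v * f' v) (1 * f' u + u * f'' u) u :=
      (hasDerivAt_id u).mul (hfd' u hu)
    have h3 : HasDerivAt (fun v : ℝ => v ^ 2) (2 * u) u := by
      simpa using hasDerivAt_pow 2 u
    have h4 : HasDerivAt F (K * (1 * f' u + u * f'' u) + 2 * π * G u - lam * (2 * u)) u :=
      ((h1.const_mul K).add (h2.const_mul (2 * π))).sub (h3.const_mul lam)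
    convert h4 using 1
    have hode := hfode u hu
    have e1 : f'' u = 2 * lam / K - f' u / u - 2 * π / K * Real.exp (f u) := by linarith
    simp only [hG]
    rw [e1]
    field_simp
    ring
  have hconst : ∀ ε, 0 < ε → ε ≤ s → F s = F ε := by
    intro ε hε hεs
    have hcont : ContinuousOn F (Set.Icc ε s) := fun z hz =>
      ((hFd z (lt_of_lt_of_le hε hz.1)).continuousAt).continuousWithinAt
    exact constant_of_has_deriv_right_zero hcont
      (fun z hz => (hFd z (lt_of_lt_of_le hε hz.1)).hasDerivWithinAt) s
      (Set.right_mem_Icc.mpr hεs)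
  have hF0 : F 0 = 0 := by simp [hF, hf'0]
  -- continuity of F at 0 within Icc 0 s
  have hFc0 : ContinuousWithinAt F (Set.Icc 0 s) 0 := by
    have c1 : ContinuousWithinAt (fun u : ℝ => u * f' u) (Set.Icc 0 s) 0 :=
      continuousWithinAt_id.mul ((hf'c 0 Set.self_mem_Ici).mono Set.Icc_subset_Ici_self)
    have c2 : ContinuousWithinAt (fun u => ∫ σ in (0:ℝ)..u, G σ) (Set.Icc 0 s) 0 := by
      have hint : IntegrableOn G (Set.uIcc 0 s) volume := by
        rw [Set.uIcc_of_le hs.le]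
        exact (hGc.mono Set.Icc_subset_Ici_self).integrableOn_Icc
      have := intervalIntegral.continuousOn_primitive_interval hint
      rw [Set.uIcc_of_le hs.le] at this
      exact this 0 (Set.left_mem_Icc.mpr hs.le)
    have c3 : ContinuousWithinAt (fun u : ℝ => lam * u ^ 2) (Set.Icc 0 s) 0 :=
      (continuous_const.mul (continuous_pow 2)).continuousWithinAt
    exact ((c1.const_smul K).add (c2.const_smul (2 * π))).sub c3
  have hne : (𝓝[Set.Ioc 0 s] (0:ℝ)).NeBot := by
    apply mem_closure_iff_nhdsWithin_neBot.mp
    rw [closure_Ioc hs.ne]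
    exact Set.left_mem_Icc.mpr hs.le
  have htend : Filter.Tendsto F (𝓝[Set.Ioc 0 s] (0:ℝ)) (𝓝 (F 0)) :=
    (hFc0.mono Set.Ioc_subset_Icc_self).tendsto
  have heq : ∀ᶠ ε in 𝓝[Set.Ioc 0 s] (0:ℝ), F ε = F s :=
    eventually_mem_nhdsWithin.mono fun ε hε => (hconst ε hε.1 hε.2).symm
  have hFs : F 0 = F s := tendsto_nhds_unique (htend.congr' heq) tendsto_const_nhds
  have : F s = 0 := by rw [← hFs, hF0]
  simp only [hF] at this
  linarith

open MeasureTheory intervalIntegral Set Filter Topology in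
set_option maxHeartbeats 2000000 in
/-- With `a` a positive C² solution of the Emden equation
`a'' = −λ/a + ξ²/a³` and `f` a C² solution on `[0,∞)` of the Liouville equation
`f'' + f'/s + (2π/K)e^f = 2λ/K` with `f'(0) = 0`, the triple
`ρ(t,x,y) = e^{f(r/a(t))}/a(t)²`, `u₁ = (a'/a)x − (ξ/a²)y`, `u₂ = (ξ/a²)x + (a'/a)y`
is a classical solution of the 2D isothermal Euler–Poisson system wherever `r > 0`:
the continuity equation and both momentum equations (pressure `P = Kρ`, radial
self-gravity) hold. -/
theorem rotational_solution_isothermal_euler_poisson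
    (K lam ξ : ℝ) (hK : 0 < K) (hξ : ξ ≠ 0)
    (a : ℝ → ℝ) (hareg : ContDiff ℝ 2 a) (hapos : ∀ t, 0 < a t)
    (haode : ∀ t, deriv (deriv a) t = -lam / a t + ξ ^ 2 / (a t) ^ 3)
    (f f' f'' : ℝ → ℝ)
    (hfc : ContinuousOn f (Set.Ici 0))
    (hf'c : ContinuousOn f' (Set.Ici 0))
    (hf''c : ContinuousOn f'' (Set.Ici 0))
    (hfd : ∀ s ∈ Set.Ioi (0 : ℝ), HasDerivAt f (f' s) s)
    (hfd' : ∀ s ∈ Set.Ioi (0 : ℝ), HasDerivAt f' (f'' s) s)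
    (hf'0 : f' 0 = 0)
    (hfode : ∀ s ∈ Set.Ioi (0 : ℝ),
      f'' s + f' s / s + (2 * π / K) * Real.exp (f s) = 2 * lam / K)
    (ρrad : ℝ → ℝ → ℝ) (ρ u₁ u₂ : ℝ → ℝ → ℝ → ℝ)
    (hρrad : ∀ t r, ρrad t r = Real.exp (f (r / a t)) / (a t) ^ 2)
    (hρ : ∀ t x y, ρ t x y = ρrad t (rad x y))
    (hu₁ : ∀ t x y, u₁ t x y = (deriv a t / a t) * x - (ξ / (a t) ^ 2) * y)
    (hu₂ : ∀ t x y, u₂ t x y = (ξ / (a t) ^ 2) * x + (deriv a t / a t) * y) :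
    ∀ t x y, 0 < rad x y →
      (deriv (fun τ => ρ τ x y) t
        + deriv (fun χ => ρ t χ y * u₁ t χ y) x
        + deriv (fun υ => ρ t x υ * u₂ t x υ) y = 0) ∧
      (ρ t x y * (deriv (fun τ => u₁ τ x y) t
            + u₁ t x y * deriv (fun χ => u₁ t χ y) x
            + u₂ t x y * deriv (fun υ => u₁ t x υ) y)
        + deriv (fun χ => K * ρ t χ y) x
        + ρ t x y * (x / (rad x y) ^ 2)
            * (2 * π * ∫ η in (0 : ℝ)..(rad x y), ρrad t η * η) = 0) ∧
      (ρ t x y * (deriv (fun τ => u₂ τ x y) t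
            + u₁ t x y * deriv (fun χ => u₂ t χ y) x
            + u₂ t x y * deriv (fun υ => u₂ t x υ) y)
        + deriv (fun υ => K * ρ t x υ) y
        + ρ t x y * (y / (rad x y) ^ 2)
            * (2 * π * ∫ η in (0 : ℝ)..(rad x y), ρrad t η * η) = 0) := by
  intro t x y hr
  have hA : 0 < a t := hapos t
  have hAne : a t ≠ 0 := ne_of_gt hA
  have hrne : rad x y ≠ 0 := ne_of_gt hr
  have hr2 : rad x y ^ 2 = x ^ 2 + y ^ 2 := Real.sq_sqrt (by positivity)
  have hxy : (0:ℝ) < x ^ 2 + y ^ 2 := hr2 ▸ (pow_pos hr 2)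
  have hs : 0 < rad x y / a t := div_pos hr hA
  have hda : Differentiable ℝ a := hareg.differentiable (by norm_num)
  have hda' : Differentiable ℝ (deriv a) := by
    have h : ContDiff ℝ (1 + 1) a := by convert hareg using 2; norm_num
    exact ((contDiff_succ_iff_deriv.mp h).2.2).differentiable one_ne_zero
  have hat : HasDerivAt a (deriv a t) t := (hda t).hasDerivAt
  have hat' : HasDerivAt (deriv a) (deriv (deriv a) t) t := (hda' t).hasDerivAt
  -- radius derivatives
  have hrx : HasDerivAt (fun χ => rad χ y) (x / rad x y) x := by
    have h1 : HasDerivAt (fun χ : ℝ => χ ^ 2 + y ^ 2) (2 * x) x := by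
      simpa using (hasDerivAt_pow 2 x).add_const (y ^ 2)
    have h2 := (Real.hasDerivAt_sqrt (ne_of_gt hxy)).comp x h1
    simp only [rad]
    refine HasDerivAt.congr_deriv h2 ?_
    rw [rad] at hrne
    field_simp [rad]
  have hry : HasDerivAt (fun υ => rad x υ) (y / rad x y) y := by
    have h1 : HasDerivAt (fun υ : ℝ => x ^ 2 + υ ^ 2) (2 * y) y := by
      simpa using ((hasDerivAt_pow 2 y).const_add (x ^ 2))
    have h2 := (Real.hasDerivAt_sqrt (ne_of_gt hxy)).comp y h1
    simp only [rad]
    refine HasDerivAt.congr_deriv h2 ?_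
    rw [rad] at hrne
    field_simp [rad]
  -- density spatial derivatives
  have hρx : HasDerivAt (fun χ => Real.exp (f (rad χ y / a t)) / a t ^ 2)
      (Real.exp (f (rad x y / a t)) * f' (rad x y / a t) * x / (rad x y * a t ^ 3)) x := by
    have h1 : HasDerivAt (fun χ => rad χ y / a t) (x / rad x y / a t) x := hrx.div_const _
    have h2 : HasDerivAt (fun χ => f (rad χ y / a t))
        (f' (rad x y / a t) * (x / rad x y / a t)) x := (hfd _ hs).comp x h1
    have h3 := ((Real.hasDerivAt_exp (f (rad x y / a t))).comp x h2).div_const (a t ^ 2)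
    refine HasDerivAt.congr_deriv h3 ?_
    field_simp
  have hρy : HasDerivAt (fun υ => Real.exp (f (rad x υ / a t)) / a t ^ 2)
      (Real.exp (f (rad x y / a t)) * f' (rad x y / a t) * y / (rad x y * a t ^ 3)) y := by
    have h1 : HasDerivAt (fun υ => rad x υ / a t) (y / rad x y / a t) y := hry.div_const _
    have h2 : HasDerivAt (fun υ => f (rad x υ / a t))
        (f' (rad x y / a t) * (y / rad x y / a t)) y := (hfd _ hs).comp y h1
    have h3 := ((Real.hasDerivAt_exp (f (rad x y / a t))).comp y h2).div_const (a t ^ 2)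
    refine HasDerivAt.congr_deriv h3 ?_
    field_simp
  -- density time derivative
  have hρt : HasDerivAt (fun τ => Real.exp (f (rad x y / a τ)) / a τ ^ 2)
      (-((Real.exp (f (rad x y / a t)) * f' (rad x y / a t) * rad x y * deriv a t
          + 2 * Real.exp (f (rad x y / a t)) * a t * deriv a t) / a t ^ 4)) t := by
    have h1 : HasDerivAt (fun τ => rad x y / a τ)
        ((0 * a t - rad x y * deriv a t) / a t ^ 2) t :=
      (hasDerivAt_const t (rad x y)).div hat hAne
    have h2 : HasDerivAt (fun τ => f (rad x y / a τ))
        (f' (rad x y / a t) * ((0 * a t - rad x y * deriv a t) / a t ^ 2)) t :=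
      (hfd _ hs).comp t h1
    have h3 := (Real.hasDerivAt_exp (f (rad x y / a t))).comp t h2
    have h4 := h3.div (hat.pow 2) (pow_ne_zero 2 hAne)
    refine HasDerivAt.congr_deriv h4 ?_
    simp only [Pi.pow_apply, Function.comp_apply]
    field_simp
    ring
  -- velocity derivatives
  have hu1x : HasDerivAt (fun χ : ℝ => deriv a t / a t * χ - ξ / a t ^ 2 * y)
      (deriv a t / a t) x := by
    simpa using (((hasDerivAt_id x).const_mul (deriv a t / a t)).sub_const (ξ / a t ^ 2 * y))
  have hu1y : HasDerivAt (fun υ : ℝ => deriv a t / a t * x - ξ / a t ^ 2 * υ)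
      (-(ξ / a t ^ 2)) y := by
    simpa using (((hasDerivAt_id y).const_mul (ξ / a t ^ 2)).const_sub (deriv a t / a t * x))
  have hu2x : HasDerivAt (fun χ : ℝ => ξ / a t ^ 2 * χ + deriv a t / a t * y)
      (ξ / a t ^ 2) x := by
    simpa using (((hasDerivAt_id x).const_mul (ξ / a t ^ 2)).add_const (deriv a t / a t * y))
  have hu2y : HasDerivAt (fun υ : ℝ => ξ / a t ^ 2 * x + deriv a t / a t * υ)
      (deriv a t / a t) y := by
    simpa using (((hasDerivAt_id y).const_mul (deriv a t / a t)).const_add (ξ / a t ^ 2 * x))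
  have hq : HasDerivAt (fun τ => deriv a τ / a τ)
      ((deriv (deriv a) t * a t - deriv a t * deriv a t) / a t ^ 2) t := hat'.div hat hAne
  have hw : HasDerivAt (fun τ => ξ / a τ ^ 2)
      (-(2 * ξ * deriv a t / a t ^ 3)) t := by
    have h1 := (hasDerivAt_const t ξ).div (hat.pow 2) (pow_ne_zero 2 hAne)
    refine HasDerivAt.congr_deriv h1 ?_
    simp only [Pi.pow_apply, Function.comp_apply]
    field_simp
    ring
  have hu1t : HasDerivAt (fun τ => deriv a τ / a τ * x - ξ / a τ ^ 2 * y)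
      ((deriv (deriv a) t * a t - deriv a t * deriv a t) / a t ^ 2 * x
        - -(2 * ξ * deriv a t / a t ^ 3) * y) t := (hq.mul_const x).sub (hw.mul_const y)
  have hu2t : HasDerivAt (fun τ => ξ / a τ ^ 2 * x + deriv a τ / a τ * y)
      (-(2 * ξ * deriv a t / a t ^ 3) * x
        + (deriv (deriv a) t * a t - deriv a t * deriv a t) / a t ^ 2 * y) t :=
    (hw.mul_const x).add (hq.mul_const y)
  -- products for continuity equation
  have hm1 : HasDerivAt (fun χ => Real.exp (f (rad χ y / a t)) / a t ^ 2
        * (deriv a t / a t * χ - ξ / a t ^ 2 * y))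
      (Real.exp (f (rad x y / a t)) * f' (rad x y / a t) * x / (rad x y * a t ^ 3)
          * (deriv a t / a t * x - ξ / a t ^ 2 * y)
        + Real.exp (f (rad x y / a t)) / a t ^ 2 * (deriv a t / a t)) x := hρx.mul hu1x
  have hm2 : HasDerivAt (fun υ => Real.exp (f (rad x υ / a t)) / a t ^ 2
        * (ξ / a t ^ 2 * x + deriv a t / a t * υ))
      (Real.exp (f (rad x y / a t)) * f' (rad x y / a t) * y / (rad x y * a t ^ 3)
          * (ξ / a t ^ 2 * x + deriv a t / a t * y)
        + Real.exp (f (rad x y / a t)) / a t ^ 2 * (deriv a t / a t)) y := hρy.mul hu2y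
  -- pressure derivatives
  have hpx : HasDerivAt (fun χ => K * (Real.exp (f (rad χ y / a t)) / a t ^ 2))
      (K * (Real.exp (f (rad x y / a t)) * f' (rad x y / a t) * x / (rad x y * a t ^ 3))) x :=
    hρx.const_mul K
  have hpy : HasDerivAt (fun υ => K * (Real.exp (f (rad x υ / a t)) / a t ^ 2))
      (K * (Real.exp (f (rad x y / a t)) * f' (rad x y / a t) * y / (rad x y * a t ^ 3))) y :=
    hρy.const_mul K
  -- the gravity integral
  have hIsub : (∫ η in (0:ℝ)..rad x y, Real.exp (f (η / a t)) / a t ^ 2 * η)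
      = ∫ σ in (0:ℝ)..(rad x y / a t), Real.exp (f σ) * σ := by
    have hfun : (fun η => Real.exp (f (η / a t)) / a t ^ 2 * η)
        = fun η => (a t)⁻¹ • ((fun σ => Real.exp (f σ) * σ) (η / a t)) := by
      funext η
      simp only [smul_eq_mul]
      generalize Real.exp (f (η / a t)) = E
      field_simp
    have hcd := intervalIntegral.integral_comp_div (a := 0) (b := rad x y) (c := a t)
      (f := fun σ => Real.exp (f σ) * σ) hAne
    rw [hfun, intervalIntegral.integral_smul, hcd, smul_smul,
      inv_mul_cancel₀ hAne, one_smul, zero_div]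
  have hIval : 2 * π * (∫ η in (0:ℝ)..rad x y, Real.exp (f (η / a t)) / a t ^ 2 * η)
      = lam * (rad x y / a t) ^ 2 - K * ((rad x y / a t) * f' (rad x y / a t)) := by
    rw [hIsub]
    exact aux_int_id K lam hK f f' f'' hfc hf'c hfd hfd' hf'0 hfode hs
  simp only [hρ, hρrad, hu₁, hu₂]
  rw [hρt.deriv, hm1.deriv, hm2.deriv, hu1t.deriv, hu1x.deriv, hu1y.deriv,
    hu2t.deriv, hu2x.deriv, hu2y.deriv, hpx.deriv, hpy.deriv, hIval, haode t]
  set r := rad x y with hrdef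
  set A := a t with hAdef
  set A' := deriv a t with hA'def
  set E := Real.exp (f (r / A)) with hEdef
  set P := f' (r / A) with hPdef
  clear_value r A A' E P
  clear hρt hm1 hm2 hρx hρy hpx hpy hu1t hu2t hu1x hu1y hu2x hu2y hq hw hrx hry
    hIsub hIval hat hat' hda hda' hfc hf'c hf''c hfd hfd' hfode hρrad hρ hu₁ hu₂ hareg
    hapos haode hrdef hAdef hA'def hEdef hPdef hf'0
  refine ⟨?_, ?_, ?_⟩
  · field_simp
    linear_combination (-(E * A' * A * P)) * hr2
  · field_simp
    ring
  · field_simp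
    ring
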